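/- With δ defined as in Euler's pentagonal setting (subtracting 1 from the first m(σ) parts and appending the new part m(σ) under the stated conditions) and δ* defined dually (adding 1 to the first n_ℓ parts and removing the last part n_ℓ, when m(σ) ≥ n_ℓ if m(σ) < ℓ, or when m(σ) > n_ℓ if m(σ) = ℓ; and δ*(σ) = 0 otherwise), the following hold for partitions σ, τ of n with distinct parts: (i) if δ(σ) = τ ≠ 0 then δ*(τ) = σ, and (ii) if δ*(τ) = σ ≠ 0 then δ(σ) = τ. -/

import Mathlib

/-- A partition of `n` with distinct parts: a strictly decreasing list of positive
integers summing to `n`. -/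
def IsDistinctPartition (n : ℕ) (σ : List ℕ) : Prop :=
  σ.Pairwise (· > ·) ∧ (∀ x ∈ σ, 0 < x) ∧ σ.sum = n

/-- `mval σ` is `m(σ)`: the maximal `m` such that `n_j = n_{j-1} - 1` for all
`2 ≤ j ≤ m`. -/
def mval : List ℕ → ℕ
  | [] => 0
  | [_] => 1
  | a :: b :: t => if b = a - 1 then mval (b :: t) + 1 else 1

/-- The coboundary map `δ`: if `m(σ) < ℓ` then `δσ = 0` when `m(σ) ≥ n_ℓ`, and
`δσ = (n_1-1, …, n_{m(σ)}-1, n_{m(σ)+1}, …, n_ℓ, m(σ))` when `m(σ) < n_ℓ`;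
if `m(σ) = ℓ` then `δσ = 0` when `m(σ) ≥ n_ℓ - 1` and
`δσ = (n_1-1, …, n_ℓ-1, m(σ))` when `m(σ) < n_ℓ - 1`.  The zero vector is
represented by `none`. -/
def deltaS (σ : List ℕ) : Option (List ℕ) :=
  if σ = [] then none
  else
    let m := mval σ
    if (m < σ.length ∧ m < σ.getLast! ) ∨ (m = σ.length ∧ m < σ.getLast! - 1) then
      some ((σ.take m).map (· - 1) ++ σ.drop m ++ [m])
    else none

/-- The adjoint map `δ*`: when (`m(σ) < ℓ` and `m(σ) ≥ n_ℓ`) or (`m(σ) = ℓ` and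
`m(σ) > n_ℓ`), `δ*σ = (n_1+1, …, n_{n_ℓ}+1, n_{n_ℓ+1}, …, n_{ℓ-1})` (add 1 to the
first `n_ℓ` parts and delete the last part); otherwise `δ*σ = 0` (`none`). -/
def deltaStarS (σ : List ℕ) : Option (List ℕ) :=
  if σ = [] then none
  else
    let m := mval σ
    let nl := σ.getLast!
    if (m < σ.length ∧ nl ≤ m) ∨ (m = σ.length ∧ nl < m) then
      some ((σ.dropLast.take nl).map (· + 1) ++ σ.dropLast.drop nl)
    else none

section Helpers

lemma mval_pos : ∀ (l : List ℕ), l ≠ [] → 1 ≤ mval l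
  | [], h => absurd rfl h
  | [a], _ => by simp [mval]
  | a :: b :: t, _ => by simp only [mval]; split <;> omega

lemma mval_le_length : ∀ (l : List ℕ), mval l ≤ l.length
  | [] => by simp [mval]
  | [a] => by simp [mval]
  | a :: b :: t => by
    have := mval_le_length (b :: t)
    simp only [mval, List.length_cons] at *
    split <;> omega

lemma stair_mval : ∀ (l : List ℕ) (i : ℕ), i + 1 < mval l → l[i+1]! = l[i]! - 1
  | [], i, h => by simp [mval] at h
  | [a], i, h => by simp [mval] at h
  | a :: b :: t, i, h => by
    simp only [mval] at h
    split at h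
    · rename_i hb
      match i with
      | 0 => simpa using hb
      | i+1 =>
        have := stair_mval (b :: t) i (by omega)
        simpa using this
    · omega

lemma mval_ge : ∀ (l : List ℕ) (m : ℕ), m ≤ l.length →
    (∀ i, i + 1 < m → l[i+1]! = l[i]! - 1) → m ≤ mval l
  | [], m, hm, _ => by simp at hm; subst hm; exact Nat.zero_le _
  | [a], m, hm, _ => by simp [mval] at hm ⊢; omega
  | a :: b :: t, m, hm, h => by
    rcases Nat.lt_or_ge m 2 with h2 | h2
    · have := mval_pos (a :: b :: t) (by simp); omega
    · have hb : b = a - 1 := by have := h 0 (by omega); simpa using this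
      have IH := mval_ge (b :: t) (m - 1) (by simp at hm ⊢; omega) (fun i hi => by
        have := h (i+1) (by omega); simpa using this)
      simp only [mval, if_pos hb]
      omega

lemma sorted_gt' {l : List ℕ} (hs : l.Pairwise (· > ·)) {i j : ℕ} (hij : i < j)
    (hj : j < l.length) : l[j]! < l[i]! := by
  rw [getElem!_pos l j hj, getElem!_pos l i (lt_trans hij hj)]
  exact List.pairwise_iff_getElem.mp hs i j (lt_trans hij hj) hj hij

lemma pos_getElem! {l : List ℕ} (hp : ∀ x ∈ l, 0 < x) {i : ℕ} (hi : i < l.length) :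
    0 < l[i]! := by
  rw [getElem!_pos l i hi]; exact hp _ (List.getElem_mem hi)

end Helpers

/-- Adjointness of `δ` and `δ*` on partitions of `n` with distinct parts:
(i) if `δσ = τ ≠ 0` then `δ*τ = σ`, and (ii) if `δ*τ = σ ≠ 0` then `δσ = τ`. -/
theorem deltaS_deltaStarS_adjoint (n : ℕ) (σ τ : List ℕ)
    (hσ : IsDistinctPartition n σ) (hτ : IsDistinctPartition n τ) :
    (deltaS σ = some τ → deltaStarS τ = some σ) ∧
    (deltaStarS τ = some σ → deltaS σ = some τ) := by
  obtain ⟨hσs, hσp, -⟩ := hσ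
  obtain ⟨hτs, hτp, -⟩ := hτ
  constructor
  · -- direction (i)
    intro h
    simp only [deltaS] at h
    split_ifs at h with h0 hc
    rw [Option.some.injEq] at h
    subst h
    have hne : σ ≠ [] := h0
    have hℓ1 : 1 ≤ σ.length := List.length_pos_iff.mpr hne
    have hm1 : 1 ≤ mval σ := mval_pos σ hne
    have hmℓ : mval σ ≤ σ.length := mval_le_length σ
    set m := mval σ with hmdef
    have hlastval : σ.getLast! = σ[σ.length - 1]! := List.getLast!_eq_getElem!
    have hmlast : m < σ[σ.length - 1]! := by
      rw [hlastval] at hc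
      have := pos_getElem! hσp (show σ.length - 1 < σ.length by omega)
      rcases hc with ⟨-, h⟩ | ⟨-, h⟩ <;> omega
    set A := (σ.take m).map (· - 1) with hA
    set B := σ.drop m with hB
    have lenA : A.length = m := by simp [hA]; omega
    have lenAB : (A ++ B).length = σ.length := by simp [hA, hB]; omega
    have lenT : (A ++ B ++ [m]).length = σ.length + 1 := by simp [hA, hB]; omega
    have hTlast : (A ++ B ++ [m]).getLast! = m :=
      List.getLast!_of_getLast? List.getLast?_concat
    -- elements of T below m
    have hTi : ∀ i, i < m → (A ++ B ++ [m])[i]! = σ[i]! - 1 := by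
      intro i hi
      rw [getElem!_pos _ i (by rw [lenT]; omega), getElem!_pos σ i (by omega),
        List.getElem_append_left (by rw [lenAB]; omega),
        List.getElem_append_left (by rw [lenA]; exact hi)]
      simp [hA]
    have hTge : m ≤ mval (A ++ B ++ [m]) := by
      apply mval_ge _ m (by rw [lenT]; omega)
      intro i hi
      rw [hTi (i+1) hi, hTi i (by omega), stair_mval σ i (by omega)]
    have hTle : mval (A ++ B ++ [m]) ≤ σ.length + 1 := by
      have := mval_le_length (A ++ B ++ [m]); omega
    have hTne : (A ++ B ++ [m]) ≠ [] := by simp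
    simp only [deltaStarS, if_neg hTne, hTlast, lenT]
    rw [if_pos (by omega : (mval (A ++ B ++ [m]) < σ.length + 1 ∧ m ≤ mval (A ++ B ++ [m])) ∨
        (mval (A ++ B ++ [m]) = σ.length + 1 ∧ m < mval (A ++ B ++ [m])))]
    rw [Option.some.injEq, List.dropLast_concat, List.take_left' lenA, List.drop_left' lenA]
    rw [hA, List.map_map]
    have h1 : (σ.take m).map ((· + 1) ∘ (· - 1)) = (σ.take m).map id :=
      List.map_congr_left (fun x hx => by
        have := hσp x (List.mem_of_mem_take hx); simp; omega)
    rw [h1, List.map_id, hB, List.take_append_drop]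
  · -- direction (ii)
    intro h
    simp only [deltaStarS] at h
    split_ifs at h with h0 hc
    rw [Option.some.injEq] at h
    subst h
    have hne : τ ≠ [] := h0
    have hL1 : 1 ≤ τ.length := List.length_pos_iff.mpr hne
    have hlastval : τ.getLast! = τ[τ.length - 1]! := List.getLast!_eq_getElem!
    set nl := τ.getLast! with hnl
    have hnl1 : 1 ≤ nl := by
      rw [hlastval]
      exact pos_getElem! hτp (by omega)
    have hm'L : mval τ ≤ τ.length := mval_le_length τ
    have hnlm' : nl ≤ mval τ := by rcases hc with ⟨-, h⟩ | ⟨-, h⟩ <;> omega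
    have hnlL : nl < τ.length := by rcases hc with ⟨h1, h2⟩ | ⟨h1, h2⟩ <;> omega
    have hL2 : 2 ≤ τ.length := by omega
    have lenD : τ.dropLast.length = τ.length - 1 := by simp
    have lenTk : ((τ.dropLast.take nl).map (· + 1)).length = nl := by simp [lenD]; omega
    have lenS : ((τ.dropLast.take nl).map (· + 1) ++ τ.dropLast.drop nl).length
        = τ.length - 1 := by simp [lenD]; omega
    have hSlow : ∀ i, i < nl →
        ((τ.dropLast.take nl).map (· + 1) ++ τ.dropLast.drop nl)[i]! = τ[i]! + 1 := by
      intro i hi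
      rw [getElem!_pos _ i (by rw [lenS]; omega), getElem!_pos τ i (by omega),
        List.getElem_append_left (by rw [lenTk]; exact hi)]
      simp [List.getElem_dropLast]
    have hShigh : ∀ i, nl ≤ i → i < τ.length - 1 →
        ((τ.dropLast.take nl).map (· + 1) ++ τ.dropLast.drop nl)[i]! = τ[i]! := by
      intro i hi hi2
      rw [getElem!_pos _ i (by rw [lenS]; omega), getElem!_pos τ i (by omega),
        List.getElem_append_right (by rw [lenTk]; exact hi), List.getElem_drop,
        List.getElem_dropLast]
      simp only [lenTk]
      simp only [show nl + (i - nl) = i from by omega]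
    have hτdec : ∀ i j, i < j → j < τ.length → τ[j]! < τ[i]! := fun i j hij hj =>
      sorted_gt' hτs hij hj
    have hge : nl ≤ mval ((τ.dropLast.take nl).map (· + 1) ++ τ.dropLast.drop nl) := by
      apply mval_ge _ nl (by rw [lenS]; omega)
      intro i hi
      rw [hSlow (i+1) hi, hSlow i (by omega), stair_mval τ i (by omega)]
      have := pos_getElem! hτp (show i < τ.length by omega)
      omega
    have hle : mval ((τ.dropLast.take nl).map (· + 1) ++ τ.dropLast.drop nl) ≤ nl := by
      by_contra hlt
      push_neg at hlt
      have hmS := mval_le_length ((τ.dropLast.take nl).map (· + 1) ++ τ.dropLast.drop nl)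
      rw [lenS] at hmS
      have hst := stair_mval ((τ.dropLast.take nl).map (· + 1) ++ τ.dropLast.drop nl)
        (nl - 1) (by omega)
      rw [show nl - 1 + 1 = nl from by omega] at hst
      rw [hShigh nl le_rfl (by omega), hSlow (nl - 1) (by omega)] at hst
      have := hτdec (nl - 1) nl (by omega) (by omega)
      have := pos_getElem! hτp (show nl - 1 < τ.length by omega)
      omega
    have hmS : mval ((τ.dropLast.take nl).map (· + 1) ++ τ.dropLast.drop nl) = nl :=
      le_antisymm hle hge
    have hSne : ((τ.dropLast.take nl).map (· + 1) ++ τ.dropLast.drop nl) ≠ [] := by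
      intro hcon
      rw [hcon] at lenS
      simp at lenS
      omega
    have hSlast : ((τ.dropLast.take nl).map (· + 1) ++ τ.dropLast.drop nl).getLast!
        = ((τ.dropLast.take nl).map (· + 1) ++ τ.dropLast.drop nl)[τ.length - 2]! := by
      rw [List.getLast!_eq_getElem!, lenS]
      congr 1
    have hdecl : τ[τ.length - 1]! < τ[τ.length - 2]! := hτdec _ _ (by omega) (by omega)
    have hcond : (mval ((τ.dropLast.take nl).map (· + 1) ++ τ.dropLast.drop nl) <
          ((τ.dropLast.take nl).map (· + 1) ++ τ.dropLast.drop nl).length ∧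
          mval ((τ.dropLast.take nl).map (· + 1) ++ τ.dropLast.drop nl) <
          ((τ.dropLast.take nl).map (· + 1) ++ τ.dropLast.drop nl).getLast!) ∨
        (mval ((τ.dropLast.take nl).map (· + 1) ++ τ.dropLast.drop nl) =
          ((τ.dropLast.take nl).map (· + 1) ++ τ.dropLast.drop nl).length ∧
          mval ((τ.dropLast.take nl).map (· + 1) ++ τ.dropLast.drop nl) <
          ((τ.dropLast.take nl).map (· + 1) ++ τ.dropLast.drop nl).getLast! - 1) := by
      rcases Nat.lt_or_ge nl (τ.length - 1) with hcase | hcase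
      · left
        constructor
        · omega
        · rw [hmS, hSlast, hShigh (τ.length - 2) (by omega) (by omega)]
          omega
      · right
        constructor
        · omega
        · rw [hmS, hSlast, hSlow (τ.length - 2) (by omega)]
          omega
    simp only [deltaS, if_neg hSne]
    rw [if_pos hcond, Option.some.injEq, hmS]
    have htake : List.take nl ((τ.dropLast.take nl).map (· + 1) ++ τ.dropLast.drop nl)
        = (τ.dropLast.take nl).map (· + 1) := List.take_left' lenTk
    have hdrop : List.drop nl ((τ.dropLast.take nl).map (· + 1) ++ τ.dropLast.drop nl)
        = τ.dropLast.drop nl := List.drop_left' lenTk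
    rw [htake, hdrop, List.map_map]
    have h1 : (τ.dropLast.take nl).map ((· - 1) ∘ (· + 1)) = (τ.dropLast.take nl).map id :=
      List.map_congr_left (fun x hx => by simp)
    rw [h1, List.map_id, List.take_append_drop]
    have hnlg : nl = τ.getLast hne := by
      rw [hlastval, List.getLast_eq_getElem, getElem!_pos τ _ (by omega)]
    rw [hnlg, List.dropLast_append_getLast hne]
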